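/- For every real α > 2, θ > 0, and R > 0, ∫_{ℝ²} θ R^α / (θ R^α + ‖x‖^α) dx = π θ^{2/α} R² Γ(1 − 2/α) Γ(1 + 2/α). -/

import Mathlib

open MeasureTheory Real
open Set

lemma aux_exp {r : ℝ} (hr : 0 < r) : ∫ u in Ioi (0:ℝ), rexp (-(r * u)) = 1 / r := by
  have h := integral_rpow_mul_exp_neg_mul_Ioi (a := 1) one_pos hr
  simpa using h

lemma key {c α : ℝ} (hc : 0 < c) (hα : 2 < α) :
    ∫ y in Ioi (0:ℝ), y * (c / (c + y ^ α))
      = c ^ (2/α) * ((1/α) * Gamma (2/α) * Gamma (1 - 2/α)) := by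
  have hα0 : (0:ℝ) < α := by linarith
  have hs0 : (0:ℝ) < 2/α := by positivity
  have hs1 : 2/α < 1 := by rw [div_lt_one hα0]; linarith
  set μ := volume.restrict (Ioi (0:ℝ)) with hμ
  set F : ℝ → ℝ → ℝ := fun u y => c * rexp (-(c*u)) * (y * rexp (-u * y ^ α)) with hF
  have hcont : Continuous (Function.uncurry F) := by
    apply Continuous.mul
    · exact continuous_const.mul ((continuous_const.mul continuous_fst).neg.rexp)
    · exact continuous_snd.mul
        ((continuous_fst.neg.mul ((continuous_rpow_const hα0.le).comp continuous_snd)).rexp)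
  -- inner integral over y, for u > 0
  have hinner : ∀ u : ℝ, u ∈ Ioi (0:ℝ) → ∫ y, F u y ∂μ
      = c * rexp (-(c*u)) * (u ^ (-(2:ℝ)/α) * (1/α) * Gamma (2/α)) := by
    intro u hu
    rw [hμ, hF]
    simp only
    rw [integral_const_mul]
    have h2 := integral_rpow_mul_exp_neg_mul_rpow (p := α) (q := 1) (b := u)
      hα0 (by norm_num) hu
    simp only [rpow_one] at h2
    rw [h2]
    norm_num
  -- integrability over the product
  have hIntInner : ∀ u : ℝ, u ∈ Ioi (0:ℝ) → Integrable (fun y => F u y) μ := by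
    intro u hu
    have h := integrableOn_rpow_mul_exp_neg_mul_rpow (s := 1) (p := α) (b := u)
      (by norm_num) (by linarith) hu
    simp only [rpow_one] at h
    exact h.const_mul _
  have hg : IntegrableOn (fun u : ℝ =>
      c * rexp (-(c*u)) * (u ^ (-(2:ℝ)/α) * (1/α) * Gamma (2/α))) (Ioi 0) := by
    have h := integrableOn_rpow_mul_exp_neg_mul_rpow (s := -(2:ℝ)/α) (p := 1) (b := c)
      (by rw [neg_div]; linarith) (by norm_num) hc
    simp only [rpow_one] at h
    have h2 : IntegrableOn (fun x : ℝ => c * (1/α) * Gamma (2/α) * (x ^ (-(2:ℝ)/α) * rexp (-c * x))) (Ioi 0) :=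
      h.const_mul _
    refine h2.congr_fun ?_ measurableSet_Ioi
    intro u hu
    simp only
    rw [neg_mul c u]
    ring
  have hInt : Integrable (Function.uncurry F) (μ.prod μ) := by
    rw [integrable_prod_iff hcont.aestronglyMeasurable]
    constructor
    · filter_upwards [ae_restrict_mem measurableSet_Ioi] with u hu
      exact hIntInner u hu
    · refine hg.congr_fun (fun u hu => ?_) measurableSet_Ioi
      beta_reduce
      rw [← hinner u hu]
      refine (integral_congr_ae ?_).symm
      filter_upwards [ae_restrict_mem measurableSet_Ioi] with y hy
      have hy' : (0:ℝ) < y := hy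
      have hnn : 0 ≤ F u y := by
        simp only [hF]
        positivity
      simp only [Function.uncurry_apply_pair, Real.norm_eq_abs, abs_of_nonneg hnn]
  -- identify LHS with the iterated integral
  have hLHS : ∫ y in Ioi (0:ℝ), y * (c / (c + y ^ α)) = ∫ y, ∫ u, F u y ∂μ ∂μ := by
    refine setIntegral_congr_fun measurableSet_Ioi (fun y hy => ?_)
    have hy' : (0:ℝ) < y := hy
    have hr : (0:ℝ) < c + y ^ α := by positivity
    have heq : ∀ u : ℝ, F u y = (c * y) * rexp (-((c + y ^ α) * u)) := by
      intro u
      have hexp : rexp (-(c*u)) * rexp (-u * y ^ α) = rexp (-((c + y ^ α) * u)) := by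
        rw [← Real.exp_add]; ring_nf
      calc F u y = c * y * (rexp (-(c*u)) * rexp (-u * y ^ α)) := by rw [hF]; ring
        _ = (c * y) * rexp (-((c + y ^ α) * u)) := by rw [hexp]
    simp only [heq]
    rw [hμ, integral_const_mul, aux_exp hr]
    field_simp
  rw [hLHS, ← integral_integral_swap hInt]
  -- compute the iterated integral
  rw [setIntegral_congr_fun measurableSet_Ioi hinner]
  have expand : ∀ u ∈ Ioi (0:ℝ), c * rexp (-(c*u)) * (u ^ (-(2:ℝ)/α) * (1/α) * Gamma (2/α))
      = (c * (1/α) * Gamma (2/α)) * (u ^ ((1 - 2/α) - 1) * rexp (-(c * u))) := by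
    intro u hu
    have : (-(2:ℝ)/α) = (1 - 2/α) - 1 := by ring
    rw [this]; ring
  rw [setIntegral_congr_fun measurableSet_Ioi expand, integral_const_mul,
    integral_rpow_mul_exp_neg_mul_Ioi (by linarith) hc]
  have h1 : c * ((1/c) ^ (1 - 2/α)) = c ^ (2/α) := by
    rw [one_div, ← Real.rpow_neg_one c, ← Real.rpow_mul hc.le]
    nth_rewrite 1 [← Real.rpow_one c]
    rw [← Real.rpow_add hc]
    congr 1
    ring
  rw [← h1]
  ring

/-- The spatial contention constant of a Poisson ALOHA network with Rayleigh fading: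
`∫_{ℝ²} θ R^α / (θ R^α + ‖x‖^α) dx = π θ^(2/α) R² Γ(1 - 2/α) Γ(1 + 2/α)`. -/
theorem rayleigh_spatial_contention (α θ R : ℝ) (hα : 2 < α) (hθ : 0 < θ) (hR : 0 < R) :
    ∫ x : EuclideanSpace ℝ (Fin 2), θ * R ^ α / (θ * R ^ α + ‖x‖ ^ α)
      = π * θ ^ (2 / α) * R ^ 2 * Gamma (1 - 2 / α) * Gamma (1 + 2 / α) := by
  have hα0 : (0:ℝ) < α := by linarith
  have hc : 0 < θ * R ^ α := by positivity
  have h := MeasureTheory.integral_fun_norm_addHaar (volume : Measure (EuclideanSpace ℝ (Fin 2)))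
    (fun r : ℝ => θ * R ^ α / (θ * R ^ α + r ^ α))
  norm_num [finrank_euclideanSpace_fin, smul_eq_mul, nsmul_eq_mul] at h
  have hvol : (volume (Metric.ball (0 : EuclideanSpace ℝ (Fin 2)) 1)).toReal = π := by
    rw [EuclideanSpace.volume_ball]
    simp only [Fintype.card_fin]
    rw [ENNReal.toReal_mul, ENNReal.toReal_pow, ENNReal.toReal_ofReal (by norm_num : (0:ℝ) ≤ 1)]
    norm_num
    exact Real.sq_sqrt Real.pi_pos.le
  rw [h, measureReal_def, hvol]
  have hkey := key hc hα
  have hmul : ∀ y : ℝ, y * (θ * R ^ α / (θ * R ^ α + y ^ α))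
      = y * (θ * R ^ α) / (θ * R ^ α + y ^ α) := fun y => by ring
  have hpow : (θ * R ^ α) ^ ((2:ℝ)/α) = θ ^ ((2:ℝ)/α) * R ^ 2 := by
    rw [Real.mul_rpow hθ.le (by positivity), ← Real.rpow_mul hR.le,
      show α * (2/α) = ((2:ℕ):ℝ) by push_cast; field_simp, Real.rpow_natCast]
  have hG : Gamma (1 + 2/α) = (2/α) * Gamma (2/α) := by
    rw [add_comm, Real.Gamma_add_one (by positivity)]
  calc 2 * (π * ∫ y in Set.Ioi (0:ℝ), y * (θ * R ^ α / (θ * R ^ α + y ^ α)))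
      = 2 * (π * ((θ * R ^ α) ^ ((2:ℝ)/α) * ((1/α) * Gamma (2/α) * Gamma (1 - 2/α)))) := by
        rw [hkey]
    _ = π * θ ^ (2 / α) * R ^ 2 * Gamma (1 - 2 / α) * Gamma (1 + 2 / α) := by
        rw [hpow, hG]; ring
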